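/- arXiv:1312.0170 — 3 statements merged into one kernel-verified Lean document; each statement's English description precedes it below -/
import Mathlib

section
/- Let Z be a locally compact metric space and let {U'_0, …, U'_n} be an open cover of Z. Then for every m ≥ n there exists a family {U_0, …, U_m} of open subsets of Z which is an (n+1)-cover of Z, such that U_k = U'_k for all k ≤ n, and for each k > n the set U_k is a disjoint union U_k = V_0 ∪ … ∪ V_n of open sets with V_i ⊆ U'_i for each i. -/
/-- A family `U` of subsets of `X` indexed by `ι` is a `k`-cover of `X` if every
subfamily of `k` of its members covers `X`. -/
def IsNCover {X ι : Type*} (k : ℕ) (U : ι → Set X) : Prop :=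
  ∀ S : Finset ι, S.card = k → ∀ x : X, ∃ i ∈ S, x ∈ U i

/-- auxiliary arithmetic lemma -/
theorem aux_pow_contra {r₁ r₂ : ℝ} (h1 : 0 < r₁) (h12 : r₁ < r₂) {i j : ℕ} (hji : j < i)
    (h : r₂ ^ i * r₁ ^ j ≤ r₁ ^ i * r₂ ^ j) : False := by
  obtain ⟨d, rfl⟩ : ∃ d, i = j + (d + 1) := ⟨i - j - 1, by omega⟩
  have h2 : (0:ℝ) < r₂ := lt_trans h1 h12
  have hd : r₁ ^ (d + 1) < r₂ ^ (d + 1) :=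
    pow_lt_pow_left₀ h12 (le_of_lt h1) (Nat.succ_ne_zero d)
  have e1 : r₂ ^ (j + (d + 1)) * r₁ ^ j = (r₁ ^ j * r₂ ^ j) * r₂ ^ (d + 1) := by
    rw [pow_add]; ring
  have e2 : r₁ ^ (j + (d + 1)) * r₂ ^ j = (r₁ ^ j * r₂ ^ j) * r₁ ^ (d + 1) := by
    rw [pow_add]; ring
  rw [e1, e2] at h
  have hp : (0:ℝ) < r₁ ^ j * r₂ ^ j := mul_pos (pow_pos h1 j) (pow_pos h2 j)
  have := (mul_le_mul_iff_right₀ hp).mp h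
  linarith

/-- Let `Z` be a locally compact metric space and `U'_0, …, U'_n` an open cover of `Z`.
Then for every `m ≥ n` there is an `(n+1)`-cover `U_0, …, U_m` of `Z` by open sets with
`U_k = U'_k` for `k ≤ n` and, for `k > n`, `U_k` a disjoint union of open sets
`V_0 ∪ … ∪ V_n` with `V_i ⊆ U'_i`. -/
theorem exists_nCover_extension {Z : Type*} [MetricSpace Z] [LocallyCompactSpace Z]
    (n : ℕ) (U' : Fin (n + 1) → Set Z)
    (hopen : ∀ i, IsOpen (U' i)) (hcover : ⋃ i, U' i = Set.univ)
    (m : ℕ) (hm : n ≤ m) :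
    ∃ U : Fin (m + 1) → Set Z,
      (∀ k, IsOpen (U k)) ∧
      IsNCover (n + 1) U ∧
      (∀ (k : Fin (m + 1)) (hk : (k : ℕ) ≤ n), U k = U' ⟨k, Nat.lt_succ_of_le hk⟩) ∧
      (∀ k : Fin (m + 1), n < (k : ℕ) →
        ∃ V : Fin (n + 1) → Set Z,
          (∀ i, IsOpen (V i)) ∧
          Pairwise (Function.onFun Disjoint V) ∧
          (∀ i, V i ⊆ U' i) ∧
          U k = ⋃ i, V i) := by
  classical
  -- the bump functions
  set f : Fin (n + 1) → Z → ℝ := fun i =>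
    if ((U' i)ᶜ : Set Z).Nonempty then (fun x => Metric.infDist x (U' i)ᶜ) else fun _ => 1
    with hf
  have hfcont : ∀ i, Continuous (f i) := by
    intro i
    by_cases h : ((U' i)ᶜ : Set Z).Nonempty
    · simpa [hf, h] using Metric.continuous_infDist_pt ((U' i)ᶜ)
    · simp only [hf, if_neg h]
      exact continuous_const
  have hfpos : ∀ i x, 0 < f i x ↔ x ∈ U' i := by
    intro i x
    by_cases h : ((U' i)ᶜ : Set Z).Nonempty
    · simp only [hf, if_pos h]
      rw [← ((hopen i).isClosed_compl.notMem_iff_infDist_pos h)]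
      simp
    · have : U' i = Set.univ := by
        have := Set.not_nonempty_iff_eq_empty.mp h
        simpa [Set.compl_empty_iff] using this
      simp [hf, h, this]
  -- weighted functions
  set r : Fin (m + 1) → ℝ := fun k => ((k : ℕ) : ℝ) with hr
  set g : Fin (m + 1) → Fin (n + 1) → Z → ℝ := fun k i x => r k ^ (i : ℕ) * f i x with hg
  -- the candidate extra sets
  set V : Fin (m + 1) → Fin (n + 1) → Set Z := fun k i =>
    ⋂ j, {x | j ≠ i → g k j x < g k i x} with hV
  have hVopen : ∀ k i, IsOpen (V k i) := by
    intro k i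
    refine isOpen_iInter_of_finite fun j => ?_
    by_cases hji : j = i
    · simp [hji]
    · have : {x | j ≠ i → g k j x < g k i x} = {x | g k j x < g k i x} := by
        ext x; simp [hji]
      rw [this]
      exact isOpen_lt (continuous_const.mul (hfcont j)) (continuous_const.mul (hfcont i))
  have hVmem : ∀ k i x, x ∈ V k i ↔ ∀ j, j ≠ i → g k j x < g k i x := by
    intro k i x
    simp [hV, Set.mem_iInter]
  have hVdisj : ∀ k, Pairwise (Function.onFun Disjoint (V k)) := by
    intro k i j hij
    rw [Function.onFun, Set.disjoint_left]
    intro x hxi hxj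
    have h1 := (hVmem k i x).mp hxi j (Ne.symm hij)
    have h2 := (hVmem k j x).mp hxj i hij
    linarith
  have hrpos : ∀ k : Fin (m + 1), n < (k : ℕ) → (0 : ℝ) < r k := by
    intro k hk
    have h0 : (0 : ℕ) < (k : ℕ) := by omega
    have : (0 : ℝ) < (((k : ℕ) : ℝ)) := by exact_mod_cast h0
    simpa [hr] using this
  have hVsub : ∀ k : Fin (m + 1), n < (k : ℕ) → ∀ i, V k i ⊆ U' i := by
    intro k hk i x hx
    obtain ⟨i₀, hi₀⟩ : ∃ i₀, x ∈ U' i₀ := by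
      have : x ∈ ⋃ i, U' i := by rw [hcover]; trivial
      simpa using this
    by_cases h : i₀ = i
    · exact h ▸ hi₀
    · have hlt := (hVmem k i x).mp hx i₀ h
      have hg0 : 0 < g k i₀ x :=
        mul_pos (pow_pos (hrpos k hk) _) ((hfpos i₀ x).mpr hi₀)
      have : 0 < g k i x := lt_trans hg0 hlt
      have hfipos : 0 < f i x := by
        by_contra hc
        push_neg at hc
        have : g k i x ≤ 0 :=
          mul_nonpos_of_nonneg_of_nonpos (le_of_lt (pow_pos (hrpos k hk) _)) hc
        linarith
      exact (hfpos i x).mp hfipos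
  -- the family
  set Uf : Fin (m + 1) → Set Z := fun k =>
    if h : (k : ℕ) ≤ n then U' ⟨(k : ℕ), Nat.lt_succ_of_le h⟩ else ⋃ i, V k i with hUf
  have hUflow : ∀ (k : Fin (m + 1)) (hk : (k : ℕ) ≤ n),
      Uf k = U' ⟨(k : ℕ), Nat.lt_succ_of_le hk⟩ := by
    intro k hk; simp [hUf, dif_pos hk]
  have hUfhigh : ∀ (k : Fin (m + 1)), n < (k : ℕ) → Uf k = ⋃ i, V k i := by
    intro k hk; simp [hUf, dif_neg (not_le.mpr hk)]
  -- key counting estimate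
  have key : ∀ x : Z,
      (Finset.univ.filter (fun k : Fin (m + 1) => x ∉ Uf k)).card ≤ n := by
    intro x
    obtain ⟨i₀, hi₀⟩ : ∃ i₀, x ∈ U' i₀ := by
      have : x ∈ ⋃ i, U' i := by rw [hcover]; trivial
      simpa using this
    set I : Finset (Fin (n + 1)) := Finset.univ.filter (fun i => x ∈ U' i) with hI
    have hi₀I : i₀ ∈ I := by simp [hI, hi₀]
    have hIne : I.Nonempty := ⟨i₀, hi₀I⟩
    have htpos : 1 ≤ I.card := Finset.card_pos.mpr hIne
    have htle : I.card ≤ n + 1 := by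
      simpa using Finset.card_filter_le Finset.univ (fun i => x ∈ U' i)
    -- argmax sets
    set A : Fin (m + 1) → Finset (Fin (n + 1)) := fun k =>
      Finset.univ.filter (fun i => ∀ j, g k j x ≤ g k i x) with hA
    have hAne : ∀ k, (A k).Nonempty := by
      intro k
      obtain ⟨b, _, hb⟩ := Finset.exists_max_image Finset.univ (fun i => g k i x)
        Finset.univ_nonempty
      exact ⟨b, by simp [hA]; intro j; exact hb j (Finset.mem_univ j)⟩
    set a : Fin (m + 1) → Fin (n + 1) := fun k => (A k).min' (hAne k) with ha
    have hamem : ∀ k, a k ∈ A k := fun k => (A k).min'_mem (hAne k)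
    have hAmax : ∀ k i, i ∈ A k → ∀ j, g k j x ≤ g k i x := by
      intro k i hi j
      simp only [hA, Finset.mem_filter] at hi
      exact hi.2 j
    have hAI : ∀ k : Fin (m + 1), n < (k : ℕ) → ∀ i ∈ A k, i ∈ I := by
      intro k hk i hi
      have hg0 : 0 < g k i₀ x :=
        mul_pos (pow_pos (hrpos k hk) _) ((hfpos i₀ x).mpr hi₀)
      have : 0 < g k i x := lt_of_lt_of_le hg0 (hAmax k i hi i₀)
      have hfipos : 0 < f i x := by
        by_contra hc
        push_neg at hc
        have : g k i x ≤ 0 :=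
          mul_nonpos_of_nonneg_of_nonpos (le_of_lt (pow_pos (hrpos k hk) _)) hc
        linarith
      simp [hI, (hfpos i x).mp hfipos]
    set Bad : Finset (Fin (m + 1)) :=
      Finset.univ.filter (fun k => n < (k : ℕ) ∧ x ∉ Uf k) with hBad
    have hsecond : ∀ k ∈ Bad, ∃ j ∈ A k, j ≠ a k := by
      intro k hk
      simp only [hBad, Finset.mem_filter] at hk
      obtain ⟨_, hkn, hkx⟩ := hk
      rw [hUfhigh k hkn] at hkx
      have : x ∉ V k (a k) := fun h => hkx (Set.mem_iUnion.mpr ⟨a k, h⟩)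
      rw [hVmem] at this
      push_neg at this
      obtain ⟨j, hjne, hjge⟩ := this
      refine ⟨j, ?_, hjne⟩
      simp only [hA, Finset.mem_filter]
      exact ⟨Finset.mem_univ j, fun j' => le_trans (hAmax k (a k) (hamem k) j') hjge⟩
    have hmono : ∀ k₁ ∈ Bad, ∀ k₂ ∈ Bad, (k₁ : ℕ) < (k₂ : ℕ) → a k₁ < a k₂ := by
      intro k₁ hk₁ k₂ hk₂ hlt
      have hk₁n : n < (k₁ : ℕ) := by
        simp only [hBad, Finset.mem_filter] at hk₁; exact hk₁.2.1
      have hk₂n : n < (k₂ : ℕ) := by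
        simp only [hBad, Finset.mem_filter] at hk₂; exact hk₂.2.1
      obtain ⟨b, hbA, hbne⟩ := hsecond k₁ hk₁
      have hab : a k₁ < b := lt_of_le_of_ne ((A k₁).min'_le b hbA) (Ne.symm hbne)
      suffices hba : b ≤ a k₂ by exact lt_of_lt_of_le hab hba
      by_contra hc
      push_neg at hc
      -- a k₂ < b; derive contradiction
      have h1 : g k₁ (a k₂) x ≤ g k₁ b x := hAmax k₁ b hbA (a k₂)
      have h2 : g k₂ b x ≤ g k₂ (a k₂) x := hAmax k₂ (a k₂) (hamem k₂) b
      have hfj : 0 < f (a k₂) x := by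
        have := hAI k₂ hk₂n (a k₂) (hamem k₂)
        simp only [hI, Finset.mem_filter] at this
        exact (hfpos _ x).mpr this.2
      have hr₁ : 0 < r k₁ := hrpos k₁ hk₁n
      have hr₁₂ : r k₁ < r k₂ := by
        simp only [hr]
        exact_mod_cast hlt
      set i : ℕ := (b : ℕ) with hi
      set j : ℕ := ((a k₂ : Fin (n + 1)) : ℕ) with hj
      have hji : j < i := hc
      have hr₂ : 0 < r k₂ := lt_trans hr₁ hr₁₂
      -- from h1 and h2 derive r₂^i * r₁^j ≤ r₁^i * r₂^j
      have step1 : r k₂ ^ i * (r k₁ ^ j * f (a k₂) x) ≤ r k₂ ^ i * (r k₁ ^ i * f b x) :=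
        mul_le_mul_of_nonneg_left h1 (le_of_lt (pow_pos hr₂ i))
      have step2 : r k₁ ^ i * (r k₂ ^ i * f b x) ≤ r k₁ ^ i * (r k₂ ^ j * f (a k₂) x) :=
        mul_le_mul_of_nonneg_left h2 (le_of_lt (pow_pos hr₁ i))
      have chain : (r k₂ ^ i * r k₁ ^ j) * f (a k₂) x ≤ (r k₁ ^ i * r k₂ ^ j) * f (a k₂) x := by
        calc (r k₂ ^ i * r k₁ ^ j) * f (a k₂) x
            = r k₂ ^ i * (r k₁ ^ j * f (a k₂) x) := by ring
          _ ≤ r k₂ ^ i * (r k₁ ^ i * f b x) := step1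
          _ = r k₁ ^ i * (r k₂ ^ i * f b x) := by ring
          _ ≤ r k₁ ^ i * (r k₂ ^ j * f (a k₂) x) := step2
          _ = (r k₁ ^ i * r k₂ ^ j) * f (a k₂) x := by ring
      have hfinal : r k₂ ^ i * r k₁ ^ j ≤ r k₁ ^ i * r k₂ ^ j :=
        le_of_mul_le_mul_right (by linarith [chain]) hfj
      exact aux_pow_contra hr₁ hr₁₂ hji hfinal
    -- bound on Bad
    have hBadcard : Bad.card ≤ I.card - 1 := by
      set imax : Fin (n + 1) := I.max' hIne with himax
      have hsub : Bad.card ≤ (I.erase imax).card := by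
        apply Finset.card_le_card_of_injOn a
        · intro k hk
          have hkn : n < (k : ℕ) := by
            simp only [hBad, Finset.mem_coe, Finset.mem_filter] at hk; exact hk.2.1
          have haI : a k ∈ I := hAI k hkn (a k) (hamem k)
          obtain ⟨b, hbA, hbne⟩ := hsecond k hk
          have hab : a k < b := lt_of_le_of_ne ((A k).min'_le b hbA) (Ne.symm hbne)
          have hbI : b ∈ I := hAI k hkn b hbA
          have : a k < imax := lt_of_lt_of_le hab (I.le_max' b hbI)
          exact Finset.mem_erase.mpr ⟨ne_of_lt this, haI⟩
        · intro k₁ hk₁ k₂ hk₂ heq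
          by_contra hne
          have hvne : (k₁ : ℕ) ≠ (k₂ : ℕ) := fun h => hne (Fin.ext h)
          rcases lt_or_gt_of_ne hvne with h | h
          · exact absurd heq (ne_of_lt (hmono k₁ hk₁ k₂ hk₂ h))
          · exact absurd heq.symm (ne_of_lt (hmono k₂ hk₂ k₁ hk₁ h))
      calc Bad.card ≤ (I.erase imax).card := hsub
        _ = I.card - 1 := Finset.card_erase_of_mem (I.max'_mem hIne)
    -- bound on failing low indices
    set FailLow : Finset (Fin (m + 1)) :=
      Finset.univ.filter (fun k => (k : ℕ) ≤ n ∧ x ∉ Uf k) with hFailLow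
    have hFailLowcard : FailLow.card ≤ (n + 1) - I.card := by
      set J : Finset (Fin (n + 1)) := Finset.univ.filter (fun i => x ∉ U' i) with hJ
      have hIJ : I.card + J.card = n + 1 := by
        have := Finset.card_filter_add_card_filter_not
          (s := (Finset.univ : Finset (Fin (n + 1)))) (p := fun i => x ∈ U' i)
        simpa [hI, hJ] using this
      have hmapped : FailLow.card ≤ J.card := by
        apply Finset.card_le_card_of_injOn
          (fun k : Fin (m + 1) =>
            (⟨min (k : ℕ) n, Nat.lt_succ_of_le (Nat.min_le_right _ _)⟩ : Fin (n + 1)))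
        · intro k hk
          simp only [hFailLow, Finset.mem_coe, Finset.mem_filter] at hk
          obtain ⟨_, hkn, hkx⟩ := hk
          rw [hUflow k hkn] at hkx
          have hmin : min (k : ℕ) n = (k : ℕ) := min_eq_left hkn
          simp only [hJ, Finset.mem_coe, Finset.mem_filter]
          refine ⟨Finset.mem_univ _, ?_⟩
          have : (⟨min (k : ℕ) n, by omega⟩ : Fin (n + 1)) =
              ⟨(k : ℕ), Nat.lt_succ_of_le hkn⟩ := Fin.ext (by simpa using hmin)
          rw [this]
          exact hkx
        · intro k₁ hk₁ k₂ hk₂ heq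
          simp only [Finset.mem_coe, hFailLow, Finset.mem_filter] at hk₁ hk₂
          have h1 : min (k₁ : ℕ) n = (k₁ : ℕ) := min_eq_left hk₁.2.1
          have h2 : min (k₂ : ℕ) n = (k₂ : ℕ) := min_eq_left hk₂.2.1
          have hval : min (k₁ : ℕ) n = min (k₂ : ℕ) n := by
            simpa using congrArg Fin.val heq
          exact Fin.ext (by omega)
      omega
    -- combine
    have hsplit : (Finset.univ.filter (fun k : Fin (m + 1) => x ∉ Uf k)) ⊆ FailLow ∪ Bad := by
      intro k hk
      simp only [Finset.mem_filter] at hk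
      rcases le_or_gt (k : ℕ) n with h | h
      · exact Finset.mem_union_left _ (by simp [hFailLow, h, hk.2])
      · exact Finset.mem_union_right _ (by simp [hBad, h, hk.2])
    calc (Finset.univ.filter (fun k : Fin (m + 1) => x ∉ Uf k)).card
        ≤ (FailLow ∪ Bad).card := Finset.card_le_card hsplit
      _ ≤ FailLow.card + Bad.card := Finset.card_union_le _ _
      _ ≤ ((n + 1) - I.card) + (I.card - 1) := Nat.add_le_add hFailLowcard hBadcard
      _ ≤ n := by omega
  refine ⟨Uf, ?_, ?_, ?_, ?_⟩
  · intro k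
    by_cases h : (k : ℕ) ≤ n
    · rw [hUflow k h]; exact hopen _
    · rw [hUfhigh k (not_le.mp h)]
      exact isOpen_iUnion fun i => hVopen k i
  · intro S hS x
    by_contra hcon
    push_neg at hcon
    have hsub : S ⊆ Finset.univ.filter (fun k : Fin (m + 1) => x ∉ Uf k) := by
      intro k hk
      simp only [Finset.mem_filter]
      exact ⟨Finset.mem_univ k, hcon k hk⟩
    have := Finset.card_le_card hsub
    rw [hS] at this
    have := key x
    omega
  · intro k hk
    exact hUflow k hk
  · intro k hk
    exact ⟨V k, hVopen k, hVdisj k, hVsub k hk, hUfhigh k hk⟩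
end

section
/- Let Z be a locally compact metric space, Δ ⊆ Z a subset, and let {U'_0, …, U'_n} be an open cover of Z such that each U'_i is deformable to Δ. Then for every m ≥ n there exists a family {U_0, …, U_m} of open subsets of Z which is an (n+1)-cover of Z, such that U_k = U'_k for all k ≤ n, each U_k with k > n is a disjoint union of open subsets V_0 ∪ … ∪ V_n with V_i ⊆ U'_i, and every member U_k of the new family is deformable to Δ. -/
/-- A subset `U ⊆ Z` is deformable to `Δ ⊆ Z` if there is a homotopy `h_t : U → Z`
with `h_0` the inclusion and `h_1(U) ⊆ Δ`. -/
def DeformableTo {Z : Type*} [TopologicalSpace Z] (U Δ : Set Z) : Prop :=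
  ∃ H : C(unitInterval × ↥U, Z),
    (∀ u : ↥U, H (0, u) = (u : Z)) ∧ (∀ u : ↥U, H (1, u) ∈ Δ)

open Set

lemma deformableTo_iUnion {Z : Type*} [TopologicalSpace Z] {Δ : Set Z} {n : ℕ}
    (V U' : Fin (n + 1) → Set Z) (hV : ∀ i, IsOpen (V i))
    (hdisj : Pairwise (Function.onFun Disjoint V))
    (hsub : ∀ i, V i ⊆ U' i) (hdef : ∀ i, DeformableTo (U' i) Δ) :
    DeformableTo (⋃ i, V i) Δ := by
  classical
  choose H h0 h1 using hdef
  set T : Set Z := ⋃ i, V i with hT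
  set S : Fin (n + 1) → Set (unitInterval × ↥T) :=
    fun i => Set.univ ×ˢ (Subtype.val ⁻¹' V i) with hSdef
  have hSopen : ∀ i, IsOpen (S i) :=
    fun i => isOpen_univ.prod ((hV i).preimage continuous_subtype_val)
  have hmem : ∀ i (p : ↥(S i)), ((p.1.2 : Z)) ∈ U' i := fun i p => hsub i p.2.2
  let φ : ∀ i, C(↥(S i), Z) := fun i =>
    ⟨fun p => H i (p.1.1, ⟨(p.1.2 : Z), hmem i p⟩), by
      apply (H i).continuous.comp
      refine Continuous.prodMk (continuous_fst.comp continuous_subtype_val) ?_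
      exact Continuous.subtype_mk
        (continuous_subtype_val.comp (continuous_snd.comp continuous_subtype_val)) _⟩
  have hφ : ∀ i j (x : unitInterval × ↥T) (hxi : x ∈ S i) (hxj : x ∈ S j),
      φ i ⟨x, hxi⟩ = φ j ⟨x, hxj⟩ := by
    intro i j x hxi hxj
    rcases eq_or_ne i j with rfl | hne
    · rfl
    · exact absurd hxj.2 (Set.disjoint_left.mp (hdisj hne) hxi.2)
  have hcov : ∀ x : unitInterval × ↥T, ∃ i, S i ∈ nhds x := by
    intro x
    obtain ⟨i, hi⟩ := mem_iUnion.mp x.2.2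
    exact ⟨i, (hSopen i).mem_nhds ⟨mem_univ _, hi⟩⟩
  refine ⟨ContinuousMap.liftCover S φ hφ hcov, ?_, ?_⟩
  · intro u
    obtain ⟨i, hi⟩ := mem_iUnion.mp u.2
    have hx : ((0 : unitInterval), u) ∈ S i := ⟨mem_univ _, hi⟩
    have := ContinuousMap.liftCover_coe (hφ := hφ) (hS := hcov)
      (⟨((0 : unitInterval), u), hx⟩ : ↥(S i))
    simpa using this.trans (h0 i _)
  · intro u
    obtain ⟨i, hi⟩ := mem_iUnion.mp u.2
    have hx : ((1 : unitInterval), u) ∈ S i := ⟨mem_univ _, hi⟩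
    have := ContinuousMap.liftCover_coe (hφ := hφ) (hS := hcov)
      (⟨((1 : unitInterval), u), hx⟩ : ↥(S i))
    rw [show ((1 : unitInterval), u) = ((⟨((1 : unitInterval), u), hx⟩ : ↥(S i)) : unitInterval × ↥T) from rfl, this]
    exact h1 i _

/-- Let `Z` be a locally compact metric space, `Δ ⊆ Z`, and `U'_0, …, U'_n` an open cover
of `Z` by sets deformable to `Δ`. Then for every `m ≥ n` there is an `(n+1)`-cover
`U_0, …, U_m` of `Z` by open sets deformable to `Δ`, with `U_k = U'_k` for `k ≤ n` and,
for `k > n`, `U_k` a disjoint union of open sets `V_0 ∪ … ∪ V_n` with `V_i ⊆ U'_i`. -/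
theorem exists_deformable_nCover_extension {Z : Type*} [MetricSpace Z]
    [LocallyCompactSpace Z] (Δ : Set Z)
    (n : ℕ) (U' : Fin (n + 1) → Set Z)
    (hopen : ∀ i, IsOpen (U' i)) (hcover : ⋃ i, U' i = Set.univ)
    (hdef : ∀ i, DeformableTo (U' i) Δ)
    (m : ℕ) (hm : n ≤ m) :
    ∃ U : Fin (m + 1) → Set Z,
      (∀ k, IsOpen (U k)) ∧
      IsNCover (n + 1) U ∧
      (∀ (k : Fin (m + 1)) (hk : (k : ℕ) ≤ n), U k = U' ⟨k, Nat.lt_succ_of_le hk⟩) ∧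
      (∀ k : Fin (m + 1), n < (k : ℕ) →
        ∃ V : Fin (n + 1) → Set Z,
          (∀ i, IsOpen (V i)) ∧
          Pairwise (Function.onFun Disjoint V) ∧
          (∀ i, V i ⊆ U' i) ∧
          U k = ⋃ i, V i) ∧
      (∀ k, DeformableTo (U k) Δ) := by
  classical
  obtain ⟨f, hf⟩ := PartitionOfUnity.exists_isSubordinate (ι := Fin (n + 1)) (s := Set.univ)
    isClosed_univ U' hopen (by rw [hcover])
  have hpos_mem : ∀ i x, 0 < f i x → x ∈ U' i := fun i x h =>
    hf i (subset_closure (by simpa [Function.mem_support] using h.ne'))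
  -- thresholds
  set c : ℕ → ℝ := fun k => (((n : ℝ) + 2) * ((k : ℝ) + 2))⁻¹ with hc
  have hbase_pos : ∀ k : ℕ, (0 : ℝ) < ((n : ℝ) + 2) * ((k : ℝ) + 2) := by
    intro k; positivity
  have hc_pos : ∀ k, 0 < c k := fun k => inv_pos.mpr (hbase_pos k)
  have hc_lt : ∀ k, c k < ((n : ℝ) + 1)⁻¹ := by
    intro k
    rw [hc]
    apply inv_strictAnti₀ (by positivity)
    nlinarith [Nat.cast_nonneg (α := ℝ) n, Nat.cast_nonneg (α := ℝ) k]
  have hc_inj : Function.Injective c := by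
    intro k k' h
    simp only [hc] at h
    have hb := inv_injective h
    have h2 : ((k : ℝ) + 2) = ((k' : ℝ) + 2) :=
      mul_left_cancel₀ (show ((n : ℝ) + 2) ≠ 0 by positivity) hb
    have h3 : (k : ℝ) = (k' : ℝ) := by linarith
    exact_mod_cast h3
  -- the max value is at least 1/(n+1)
  have hmax : ∀ x : Z, ∃ i, ((n : ℝ) + 1)⁻¹ ≤ f i x := by
    intro x
    by_contra h
    push_neg at h
    have hsum : ∑ i : Fin (n + 1), f i x = 1 :=
      f.sum_finsupport' (Set.mem_univ x) (Finset.subset_univ _)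
    have hlt : ∑ i : Fin (n + 1), f i x < ∑ _i : Fin (n + 1), ((n : ℝ) + 1)⁻¹ :=
      Finset.sum_lt_sum_of_nonempty Finset.univ_nonempty (fun i _ => h i)
    rw [Finset.sum_const, Finset.card_univ, Fintype.card_fin, nsmul_eq_mul] at hlt
    have hne : ((n : ℝ) + 1) ≠ 0 := by positivity
    rw [show ((n + 1 : ℕ) : ℝ) = (n : ℝ) + 1 by push_cast; ring,
      mul_inv_cancel₀ hne] at hlt
    linarith [hsum]
  -- the pieces
  set V : Fin (m + 1) → Fin (n + 1) → Set Z := fun k i =>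
    {x | c k < f i x ∧ (∀ j : Fin (n + 1), (j : ℕ) < (i : ℕ) → f j x < c k) ∧
      ∀ j : Fin (n + 1), f j x ≠ c k} with hV
  have hVopen : ∀ k i, IsOpen (V k i) := by
    intro k i
    have : V k i = {x | c ↑k < f i x} ∩
        ((⋂ j : Fin (n + 1), {x | (j : ℕ) < (i : ℕ) → f j x < c ↑k}) ∩
          ⋂ j : Fin (n + 1), {x | f j x ≠ c ↑k}) := by
      ext x
      simp only [hV, Set.mem_setOf_eq, Set.mem_inter_iff, Set.mem_iInter]
    rw [this]
    refine (isOpen_lt continuous_const (f i).continuous).inter (IsOpen.inter ?_ ?_)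
    · refine isOpen_iInter_of_finite fun j => ?_
      by_cases hj : (j : ℕ) < (i : ℕ)
      · have he : {x : Z | (j : ℕ) < (i : ℕ) → f j x < c ↑k} = {x | f j x < c ↑k} := by
          ext x; simp [hj]
        rw [he]; exact isOpen_lt (f j).continuous continuous_const
      · have he : {x : Z | (j : ℕ) < (i : ℕ) → f j x < c ↑k} = Set.univ := by
          ext x; simp [hj]
        rw [he]; exact isOpen_univ
    · exact isOpen_iInter_of_finite fun j =>
        isOpen_ne_fun (f j).continuous continuous_const
  have hVdisj : ∀ k, Pairwise (Function.onFun Disjoint (V k)) := by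
    intro k i j hne
    have hv : (i : ℕ) ≠ (j : ℕ) := fun h => hne (Fin.ext h)
    refine Set.disjoint_left.mpr fun x hxi hxj => ?_
    rcases hv.lt_or_gt with h | h
    · exact absurd (hxj.2.1 i h) (not_lt.mpr hxi.1.le)
    · exact absurd (hxi.2.1 j h) (not_lt.mpr hxj.1.le)
  have hVsub : ∀ k i, V k i ⊆ U' i := fun k i x hx =>
    hpos_mem i x ((hc_pos k).trans hx.1)
  have hVcover : ∀ (k : Fin (m + 1)) (x : Z), (∀ j, f j x ≠ c ↑k) → x ∈ ⋃ i, V k i := by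
    intro k x hne
    obtain ⟨i₀, hi₀⟩ := hmax x
    set A : Finset (Fin (n + 1)) := Finset.univ.filter (fun j => c ↑k < f j x) with hA
    have hAne : A.Nonempty := ⟨i₀, by simp [hA, lt_of_lt_of_le (hc_lt ↑k) hi₀]⟩
    set i := A.min' hAne with hi
    refine Set.mem_iUnion.mpr ⟨i, ?_, ?_, hne⟩
    · have : i ∈ A := A.min'_mem hAne
      simpa [hA] using this
    · intro j hj
      have hjA : j ∉ A := by
        intro hjA
        have hle := A.min'_le j hjA
        rw [Fin.le_def] at hle
        omega
      have : ¬ c ↑k < f j x := by simpa [hA] using hjA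
      exact lt_of_le_of_ne (not_lt.mp this) (hne j)
  set U : Fin (m + 1) → Set Z := fun k =>
    if h : (k : ℕ) ≤ n then U' ⟨k, Nat.lt_succ_of_le h⟩ else ⋃ i, V k i with hU
  refine ⟨U, ?_, ?_, ?_, ?_, ?_⟩
  · intro k
    by_cases h : (k : ℕ) ≤ n
    · simp only [hU]; rw [dif_pos h]; exact hopen _
    · simp only [hU]; rw [dif_neg h]; exact isOpen_iUnion (hVopen k)
  · -- IsNCover
    intro S hcard x
    by_contra h
    push_neg at h
    obtain ⟨i₀, hi₀⟩ := hmax x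
    have hz : (0 : ℝ) < ((n : ℝ) + 1)⁻¹ := by positivity
    have hxU : x ∈ U' i₀ := hpos_mem i₀ x (lt_of_lt_of_le hz hi₀)
    set g : Fin (m + 1) → Fin (n + 1) := fun k =>
      if hk : (k : ℕ) ≤ n then ⟨k, Nat.lt_succ_of_le hk⟩
      else if he : ∃ j, f j x = c ↑k then he.choose else i₀ with hg
    -- for k ∈ S with k > n, there exists j with f j x = c k
    have hkey : ∀ k ∈ S, ¬ (k : ℕ) ≤ n → ∃ j, f j x = c ↑k := by
      intro k hk hkn
      by_contra hno
      push_neg at hno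
      exact h k hk (by simp only [hU]; rw [dif_neg hkn]; exact hVcover k x hno)
    have hmem_t : ∀ k ∈ S, g k ∈ Finset.univ.erase i₀ := by
      intro k hk
      rw [Finset.mem_erase]
      refine ⟨?_, Finset.mem_univ _⟩
      by_cases hkn : (k : ℕ) ≤ n
      · intro heq
        apply h k hk
        simp only [hU]; rw [dif_pos hkn]
        rw [hg] at heq
        simp only [dif_pos hkn] at heq
        rw [heq]; exact hxU
      · have he := hkey k hk hkn
        have hgk : g k = he.choose := by rw [hg]; simp [hkn, he]
        intro heq
        have hv : f i₀ x = c ↑k := by rw [← heq, hgk]; exact he.choose_spec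
        have := lt_of_lt_of_le (hc_lt ↑k) hi₀
        rw [← hv] at this
        exact lt_irrefl _ this
    have hinj : Set.InjOn g ↑S := by
      intro k hk k' hk' heq
      by_cases hkn : (k : ℕ) ≤ n <;> by_cases hkn' : (k' : ℕ) ≤ n
      · rw [hg] at heq
        simp only [dif_pos hkn, dif_pos hkn'] at heq
        simp only [Fin.mk.injEq] at heq
        exact Fin.ext heq
      · exfalso
        have he' := hkey k' hk' hkn'
        have hgk' : g k' = he'.choose := by rw [hg]; simp [hkn', he']
        have hgk : g k = ⟨↑k, Nat.lt_succ_of_le hkn⟩ := by rw [hg]; simp [hkn]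
        have hv : f (g k) x = c ↑k' := by rw [heq, hgk']; exact he'.choose_spec
        apply h k hk
        simp only [hU]; rw [dif_pos hkn, ← hgk]
        exact hpos_mem _ x (by rw [hv]; exact hc_pos _)
      · exfalso
        have he := hkey k hk hkn
        have hgk : g k = he.choose := by rw [hg]; simp [hkn, he]
        have hgk' : g k' = ⟨↑k', Nat.lt_succ_of_le hkn'⟩ := by rw [hg]; simp [hkn']
        have hv : f (g k') x = c ↑k := by rw [← heq, hgk]; exact he.choose_spec
        apply h k' hk'
        simp only [hU]; rw [dif_pos hkn', ← hgk']
        exact hpos_mem _ x (by rw [hv]; exact hc_pos _)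
      · have he := hkey k hk hkn
        have he' := hkey k' hk' hkn'
        have hgk : g k = he.choose := by rw [hg]; simp [hkn, he]
        have hgk' : g k' = he'.choose := by rw [hg]; simp [hkn', he']
        have h1 : f (g k) x = c ↑k := by rw [hgk]; exact he.choose_spec
        have h2 : f (g k) x = c ↑k' := by rw [heq, hgk']; exact he'.choose_spec
        have : (k : ℕ) = (k' : ℕ) := hc_inj (h1.symm.trans h2)
        exact Fin.ext this
    have hle := Finset.card_le_card_of_injOn g hmem_t hinj
    rw [hcard, Finset.card_erase_of_mem (Finset.mem_univ _), Finset.card_univ,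
      Fintype.card_fin] at hle
    omega
  · intro k hk
    simp only [hU]; rw [dif_pos hk]
  · intro k hk
    refine ⟨V k, hVopen k, hVdisj k, hVsub k, ?_⟩
    simp only [hU]; rw [dif_neg (not_le.mpr hk)]
  · intro k
    by_cases hk : (k : ℕ) ≤ n
    · simp only [hU]; rw [dif_pos hk]
      exact hdef _
    · simp only [hU]; rw [dif_neg hk]
      exact deformableTo_iUnion (V k) U' (hVopen k) (hVdisj k) (hVsub k) hdef
end

section
/- Let X be a metric space, A a subset of X, and 𝒱' = {V'_i}_{i∈J} a cover of A by sets open in A. Then 𝒱' can be extended to a family 𝒱 = {V_i}_{i∈J} of sets open in X covering A, with the same nerve as 𝒱' (i.e., for every finite subset S ⊆ J the intersection ⋂_{i∈S} V_i is nonempty if and only if ⋂_{i∈S} V'_i is nonempty) and such that V_i ∩ A = V'_i for all i ∈ J. -/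
/-- Let `X` be a metric space, `A ⊆ X`, and `𝒱' = {V'_i}_{i ∈ J}` a cover of `A` by sets
open in `A`. Then `𝒱'` extends to a family `𝒱 = {V_i}_{i ∈ J}` of sets open in `X`
covering `A`, with the same nerve (for every finite `S ⊆ J`, `⋂_{i ∈ S} V_i ≠ ∅` iff
`⋂_{i ∈ S} V'_i ≠ ∅`) and with `V_i ∩ A = V'_i` for all `i`. -/
theorem exists_open_extension_same_nerve {X : Type*} [MetricSpace X] (A : Set X)
    {J : Type*} (V' : J → Set X)
    (hsub : ∀ i, V' i ⊆ A)
    (hopen : ∀ i, ∃ W : Set X, IsOpen W ∧ V' i = W ∩ A)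
    (hcover : A ⊆ ⋃ i, V' i) :
    ∃ V : J → Set X,
      (∀ i, IsOpen (V i)) ∧
      A ⊆ ⋃ i, V i ∧
      (∀ i, V i ∩ A = V' i) ∧
      (∀ S : Finset J, (⋂ i ∈ S, V i).Nonempty ↔ (⋂ i ∈ S, V' i).Nonempty) := by
  classical
  set r : J → X → ℝ := fun i a =>
    if (A \ V' i).Nonempty then Metric.infDist a (A \ V' i) / 2 else 1 with hr
  -- positivity of the radii
  have hrpos : ∀ i, ∀ a ∈ V' i, 0 < r i a := by
    intro i a ha
    obtain ⟨W, hW, hWA⟩ := hopen i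
    have haW : a ∈ W := (hWA ▸ ha).1
    obtain ⟨ε, hε, hball⟩ := Metric.isOpen_iff.mp hW a haW
    by_cases hne : (A \ V' i).Nonempty
    · have : ε ≤ Metric.infDist a (A \ V' i) := by
        by_contra h
        rw [not_le] at h
        obtain ⟨y, hy, hd⟩ := (Metric.infDist_lt_iff hne).mp h
        have : y ∈ W := hball (by rwa [Metric.mem_ball, dist_comm])
        exact hy.2 (hWA ▸ ⟨this, hy.1⟩)
      simp only [hr, if_pos hne]
      linarith
    · simp only [hr, if_neg hne]; norm_num
  -- key separation property
  have hkey : ∀ i, ∀ a ∈ V' i, ∀ x ∈ A, dist x a < 2 * r i a → x ∈ V' i := by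
    intro i a ha x hx hd
    by_cases hne : (A \ V' i).Nonempty
    · simp only [hr, if_pos hne] at hd
      by_contra hxV
      have : Metric.infDist a (A \ V' i) ≤ dist a x :=
        Metric.infDist_le_dist_of_mem ⟨hx, hxV⟩
      rw [dist_comm] at this
      linarith
    · rw [Set.not_nonempty_iff_eq_empty, Set.diff_eq_empty] at hne
      exact hne hx
  refine ⟨fun i => ⋃ a ∈ V' i, Metric.ball a (r i a), ?_, ?_, ?_, ?_⟩
  · intro i
    exact isOpen_biUnion fun a _ => Metric.isOpen_ball
  · intro x hx
    obtain ⟨i, hi⟩ := Set.mem_iUnion.mp (hcover hx)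
    exact Set.mem_iUnion.mpr ⟨i, Set.mem_biUnion hi
      (Metric.mem_ball_self (hrpos i x hi))⟩
  · intro i
    ext x
    constructor
    · rintro ⟨hx, hxA⟩
      obtain ⟨a, ha, hxb⟩ := Set.mem_iUnion₂.mp hx
      exact hkey i a ha x hxA
        (lt_of_lt_of_le (Metric.mem_ball.mp hxb) (by linarith [hrpos i a ha]))
    · intro hx
      exact ⟨Set.mem_biUnion hx (Metric.mem_ball_self (hrpos i x hx)), hsub i hx⟩
  · intro S
    constructor
    · rintro ⟨x, hx⟩
      rcases S.eq_empty_or_nonempty with rfl | hS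
      · exact ⟨x, by simp⟩
      have hx' : ∀ i ∈ S, ∃ a, a ∈ V' i ∧ x ∈ Metric.ball a (r i a) := by
        intro i hi
        have := Set.mem_iInter₂.mp hx i hi
        obtain ⟨a, ha, hb⟩ := Set.mem_iUnion₂.mp this
        exact ⟨a, ha, hb⟩
      choose a ha hb using hx'
      obtain ⟨i0, hi0S, hi0min⟩ := Finset.exists_min_image S.attach
        (fun i => r i.1 (a i.1 i.2)) (by simpa using hS)
      refine ⟨a i0.1 i0.2, Set.mem_iInter₂.mpr fun j hj => ?_⟩
      have h1 : dist (a i0.1 i0.2) (a j hj) <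
          r i0.1 (a i0.1 i0.2) + r j (a j hj) := by
        calc dist (a i0.1 i0.2) (a j hj)
            ≤ dist (a i0.1 i0.2) x + dist x (a j hj) := dist_triangle _ _ _
          _ < r i0.1 (a i0.1 i0.2) + r j (a j hj) := by
              have h2 := Metric.mem_ball.mp (hb i0.1 i0.2)
              have h3 := Metric.mem_ball.mp (hb j hj)
              rw [dist_comm] at h2
              linarith
      have hle : r i0.1 (a i0.1 i0.2) ≤ r j (a j hj) :=
        hi0min ⟨j, hj⟩ (Finset.mem_attach _ _)
      exact hkey j (a j hj) (ha j hj) (a i0.1 i0.2) (hsub i0.1 (ha i0.1 i0.2))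
        (by linarith)
    · rintro ⟨x, hx⟩
      refine ⟨x, Set.mem_iInter₂.mpr fun i hi => ?_⟩
      have hxi := Set.mem_iInter₂.mp hx i hi
      exact Set.mem_biUnion hxi (Metric.mem_ball_self (hrpos i x hxi))
end
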